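/- arXiv:1608.00722 — 2 statements merged into one kernel-verified Lean document; each statement's English description precedes it below -/
import Mathlib

section
/- (Lemma 4.1.) Let P ≥ 0 and define g₁ : ℝ → ℝ by g₁(A) = 1 − (1/2 + (1/2)·erf(√(A/2) + √(P/2)))². Then g₁ is monotonically decreasing on [0, ∞) (AntitoneOn g₁ (Set.Ici 0)) and convex on [0, ∞) (ConvexOn ℝ (Set.Ici 0) g₁). -/
open MeasureTheory ProbabilityTheory Real Set

noncomputable def erf (x : ℝ) : ℝ :=
  (2 / Real.sqrt Real.pi) * ∫ t in (0:ℝ)..x, Real.exp (-t^2)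

noncomputable def Ef (x : ℝ) : ℝ := 1/2 + (1/2) * erf x
noncomputable def Ef' (x : ℝ) : ℝ := Real.exp (-x^2) / Real.sqrt Real.pi

lemma hasDerivAt_erf (x : ℝ) :
    HasDerivAt erf (2 / Real.sqrt Real.pi * Real.exp (-x^2)) x := by
  have hc : Continuous fun t : ℝ => Real.exp (-t^2) := by continuity
  have h : HasDerivAt (fun y => ∫ t in (0:ℝ)..y, Real.exp (-t^2)) (Real.exp (-x^2)) x :=
    intervalIntegral.integral_hasDerivAt_right (hc.intervalIntegrable _ _)
      (hc.stronglyMeasurableAtFilter _ _) hc.continuousAt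
  unfold erf
  exact h.const_mul _

lemma hasDerivAt_Ef (x : ℝ) : HasDerivAt Ef (Ef' x) x := by
  have h := ((hasDerivAt_erf x).const_mul (1/2)).const_add (1/2)
  have hpi : Real.sqrt Real.pi ≠ 0 := ne_of_gt (Real.sqrt_pos.mpr Real.pi_pos)
  refine h.congr_deriv ?_
  unfold Ef'
  field_simp

lemma hasDerivAt_Ef' (x : ℝ) : HasDerivAt Ef' (-2 * x * Ef' x) x := by
  have h1 : HasDerivAt (fun y : ℝ => Real.exp (-y^2)) (Real.exp (-x^2) * (-(2*x))) x := by
    have := ((hasDerivAt_pow 2 x).neg).exp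
    refine this.congr_deriv ?_
    simp only [Pi.neg_apply]
    ring_nf
  have := h1.div_const (Real.sqrt Real.pi)
  refine this.congr_deriv ?_
  unfold Ef'
  ring

lemma erf_monotone : Monotone erf := by
  have hdiff : Differentiable ℝ erf := fun x => (hasDerivAt_erf x).differentiableAt
  apply monotone_of_deriv_nonneg hdiff
  intro x
  rw [(hasDerivAt_erf x).deriv]
  positivity

lemma erf_nonneg {x : ℝ} (hx : 0 ≤ x) : 0 ≤ erf x := by
  have h0 : erf 0 = 0 := by unfold erf; simp
  rw [← h0]; exact erf_monotone hx

lemma Ef_monotone : Monotone Ef := fun a b h => by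
  unfold Ef; have := erf_monotone h; linarith

lemma Ef_half_le {x : ℝ} (hx : 0 ≤ x) : 1/2 ≤ Ef x := by
  unfold Ef; have := erf_nonneg hx; linarith

lemma Ef'_pos (x : ℝ) : 0 < Ef' x := by
  unfold Ef'
  exact div_pos (Real.exp_pos _) (Real.sqrt_pos.mpr Real.pi_pos)

lemma Ef'_le_one (x : ℝ) : Ef' x ≤ 1 := by
  unfold Ef'
  have h1 : Real.exp (-x^2) ≤ 1 := Real.exp_le_one_iff.mpr (by nlinarith [sq_nonneg x])
  have h2 : (1:ℝ) ≤ Real.sqrt Real.pi := by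
    rw [show (1:ℝ) = Real.sqrt 1 by simp]
    exact Real.sqrt_le_sqrt (by nlinarith [Real.pi_gt_three])
  have h3 : 0 < Real.sqrt Real.pi := lt_of_lt_of_le one_pos h2
  rw [div_le_one h3]
  exact h1.trans h2

lemma continuous_Ef : Continuous Ef :=
  (Differentiable.continuous fun x => (hasDerivAt_Ef x).differentiableAt)

noncomputable def Gf (c : ℝ) : ℝ → ℝ := fun A => 1 - (Ef (Real.sqrt (A/2) + c))^2
noncomputable def Gf' (c : ℝ) : ℝ → ℝ := fun A =>
  -(Ef (Real.sqrt (A/2) + c) * Ef' (Real.sqrt (A/2) + c) / (2 * Real.sqrt (A/2)))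

lemma hasDerivAt_sqrt_half {A : ℝ} (hA : 0 < A) :
    HasDerivAt (fun A : ℝ => Real.sqrt (A/2)) (1/(4 * Real.sqrt (A/2))) A := by
  have h1 : HasDerivAt (fun A : ℝ => A/2) (1/2) A := (hasDerivAt_id A).div_const 2
  have h2 := (Real.hasDerivAt_sqrt (show A/2 ≠ 0 by positivity)).comp A h1
  refine h2.congr_deriv ?_
  field_simp
  ring

lemma hasDerivAt_Gf {c A : ℝ} (hA : 0 < A) : HasDerivAt (Gf c) (Gf' c A) A := by
  have hq : 0 < Real.sqrt (A/2) := Real.sqrt_pos.mpr (by positivity)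
  have hs : HasDerivAt (fun A : ℝ => Real.sqrt (A/2) + c) (1/(4 * Real.sqrt (A/2))) A :=
    (hasDerivAt_sqrt_half hA).add_const c
  have hu : HasDerivAt (fun A : ℝ => Ef (Real.sqrt (A/2) + c))
      (Ef' (Real.sqrt (A/2) + c) * (1/(4 * Real.sqrt (A/2)))) A :=
    (hasDerivAt_Ef _).comp A hs
  have := (hu.pow 2).const_sub 1
  refine this.congr_deriv ?_
  unfold Gf'
  field_simp
  ring

noncomputable def Gf'' (c : ℝ) : ℝ → ℝ := fun A =>
  Ef' (Real.sqrt (A/2) + c) / (8 * (Real.sqrt (A/2))^2) *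
    (2 * (Real.sqrt (A/2) + c) * Ef (Real.sqrt (A/2) + c)
      + Ef (Real.sqrt (A/2) + c) / Real.sqrt (A/2) - Ef' (Real.sqrt (A/2) + c))

lemma hasDerivAt_Gf' {c A : ℝ} (hA : 0 < A) : HasDerivAt (Gf' c) (Gf'' c A) A := by
  have hq : 0 < Real.sqrt (A/2) := Real.sqrt_pos.mpr (by positivity)
  have hqne : Real.sqrt (A/2) ≠ 0 := ne_of_gt hq
  have hs : HasDerivAt (fun A : ℝ => Real.sqrt (A/2) + c) (1/(4 * Real.sqrt (A/2))) A :=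
    (hasDerivAt_sqrt_half hA).add_const c
  have hu : HasDerivAt (fun A : ℝ => Ef (Real.sqrt (A/2) + c))
      (Ef' (Real.sqrt (A/2) + c) * (1/(4 * Real.sqrt (A/2)))) A :=
    (hasDerivAt_Ef _).comp A hs
  have hv : HasDerivAt (fun A : ℝ => Ef' (Real.sqrt (A/2) + c))
      ((-2 * (Real.sqrt (A/2) + c) * Ef' (Real.sqrt (A/2) + c)) * (1/(4 * Real.sqrt (A/2)))) A :=
    (hasDerivAt_Ef' _).comp A hs
  have hw : HasDerivAt (fun A : ℝ => 2 * Real.sqrt (A/2)) (2 * (1/(4 * Real.sqrt (A/2)))) A :=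
    (hasDerivAt_sqrt_half hA).const_mul 2
  have hwne : 2 * Real.sqrt (A/2) ≠ 0 := by positivity
  have := ((hu.mul hv).div hw hwne).neg
  refine this.congr_deriv ?_
  simp only [Pi.mul_apply]
  unfold Gf''
  set q := Real.sqrt (A/2) with hqdef
  field_simp
  ring

lemma Gf''_nonneg {c A : ℝ} (hc : 0 ≤ c) (hA : 0 < A) : 0 ≤ Gf'' c A := by
  unfold Gf''
  set q := Real.sqrt (A/2) with hqdef
  have hq : 0 < q := Real.sqrt_pos.mpr (by positivity)
  have hu : 1/2 ≤ Ef (q + c) := Ef_half_le (by positivity)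
  have hv0 : 0 < Ef' (q + c) := Ef'_pos _
  have hv1 : Ef' (q + c) ≤ 1 := Ef'_le_one _
  have h1 : (1:ℝ) ≤ q + 1/(2*q) := by
    rw [← sub_nonneg]
    have he : q + 1/(2*q) - 1 = (2*q^2 - 2*q + 1)/(2*q) := by field_simp; ring
    rw [he]
    apply div_nonneg (by nlinarith [sq_nonneg (q - 1/2)]) (by positivity)
  have h2 : q ≤ 2*(q+c)*Ef (q+c) := by nlinarith
  have h3 : 1/(2*q) ≤ Ef (q+c) / q := by
    rw [show (1:ℝ)/(2*q) = (1/2)/q by ring]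
    gcongr
  apply mul_nonneg (by positivity)
  linarith

lemma continuous_Gf (c : ℝ) : Continuous (Gf c) := by
  unfold Gf
  exact continuous_const.sub
    ((continuous_Ef.comp ((Real.continuous_sqrt.comp (continuous_id.div_const 2)).add
      continuous_const)).pow 2)

lemma mainAux {c : ℝ} (hc : 0 ≤ c) :
    AntitoneOn (Gf c) (Set.Ici 0) ∧ ConvexOn ℝ (Set.Ici 0) (Gf c) := by
  constructor
  · intro a ha b hb hab
    unfold Gf
    have h1 : Ef (Real.sqrt (a/2) + c) ≤ Ef (Real.sqrt (b/2) + c) :=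
      Ef_monotone (add_le_add_left (Real.sqrt_le_sqrt (by linarith [mem_Ici.mp ha])) c)
    have h0 : 0 ≤ Ef (Real.sqrt (a/2) + c) := le_trans (by norm_num)
      (Ef_half_le (add_nonneg (Real.sqrt_nonneg _) hc))
    have := pow_le_pow_left₀ h0 h1 2
    linarith
  · apply convexOn_of_hasDerivWithinAt2_nonneg (convex_Ici 0) (f' := Gf' c) (f'' := Gf'' c)
      ((continuous_Gf c).continuousOn)
    · rw [interior_Ici]
      exact fun x hx => (hasDerivAt_Gf (mem_Ioi.mp hx)).hasDerivWithinAt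
    · rw [interior_Ici]
      exact fun x hx => (hasDerivAt_Gf' (mem_Ioi.mp hx)).hasDerivWithinAt
    · rw [interior_Ici]
      exact fun x hx => Gf''_nonneg hc (mem_Ioi.mp hx)

theorem stmt_14 (P : ℝ) (hP : 0 ≤ P)
    (g₁ : ℝ → ℝ)
    (hg₁ : ∀ A, g₁ A = 1 - (1/2 + (1/2) * erf (Real.sqrt (A/2) + Real.sqrt (P/2)))^2) :
    AntitoneOn g₁ (Set.Ici 0) ∧ ConvexOn ℝ (Set.Ici 0) g₁ := by
  have hfun : g₁ = Gf (Real.sqrt (P/2)) := by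
    funext A
    rw [hg₁]
    unfold Gf Ef
    rfl
  rw [hfun]
  exact mainAux (Real.sqrt_nonneg _)
end

section
/- (Lemma 4.2, third bullet.) Let P > 2 and define g₂ : ℝ → ℝ by g₂(B) = 1 − (1/2 + (1/2)·erf(√(B/2) − √(P/2)))². Set ζ₁ = ((√P − √(P−2))/2)² and ζ₂ = ((√P + √(P−2))/2)². Then g₂ is concave on [ζ₁, ζ₂] (ConcaveOn ℝ (Set.Icc ζ₁ ζ₂) g₂). -/
open MeasureTheory ProbabilityTheory Real Set

lemma gauss_integrable : Integrable (fun t : ℝ => Real.exp (-t^2)) := by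
  simpa using integrable_exp_neg_mul_sq (one_pos)

lemma gauss_Iic_zero : (∫ t in Set.Iic (0:ℝ), Real.exp (-t^2)) = Real.sqrt π / 2 := by
  have h1 := integral_comp_neg_Iic (0:ℝ) (fun x => Real.exp (-x^2))
  have h2 := integral_gaussian_Ioi (1:ℝ)
  simp only [neg_zero] at h1
  have h3 : (∫ t in Set.Iic (0:ℝ), Real.exp (-t^2)) = ∫ x in Set.Ioi (0:ℝ), Real.exp (-x^2) := by
    rw [← h1]; congr 1; ext x; ring_nf
  rw [h3]
  have : (∫ x in Set.Ioi (0:ℝ), Real.exp (-x^2)) = ∫ x in Set.Ioi (0:ℝ), Real.exp (-1*x^2) := by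
    congr 1; ext x; ring_nf
  rw [this, h2]; norm_num

lemma erf_Iic (u : ℝ) :
    1 + erf u = (2 / Real.sqrt π) * ∫ t in Set.Iic u, Real.exp (-t^2) := by
  have h := intervalIntegral.integral_Iic_sub_Iic
    (gauss_integrable.integrableOn (s := Set.Iic (0:ℝ)))
    (gauss_integrable.integrableOn (s := Set.Iic u)) (μ := volume)
  rw [erf, ← h, gauss_Iic_zero]
  have hπ : Real.sqrt π ≠ 0 := ne_of_gt (Real.sqrt_pos.mpr Real.pi_pos)
  field_simp
  ring

lemma one_add_erf_nonneg (u : ℝ) : 0 ≤ 1 + erf u := by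
  rw [erf_Iic]
  have h1 : 0 ≤ ∫ t in Set.Iic u, Real.exp (-t^2) :=
    setIntegral_nonneg measurableSet_Iic (fun t _ => (Real.exp_pos _).le)
  positivity

lemma neg_mul_gauss_integrable : Integrable (fun t : ℝ => (-t) * Real.exp (-t^2)) := by
  exact (Integrable.neg (by simpa using integrable_mul_exp_neg_mul_sq (one_pos))).congr
    (Filter.Eventually.of_forall (fun t => by simp [neg_mul]))

lemma gauss_tendsto_zero :
    Filter.Tendsto (fun t : ℝ => Real.exp (-t^2) / 2) Filter.atBot (nhds 0) := by
  have h1 : Filter.Tendsto (fun t : ℝ => -t^2) Filter.atBot Filter.atBot := by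
    have h2 : Filter.Tendsto (fun t : ℝ => t^2) Filter.atBot Filter.atTop := by
      have := (Filter.tendsto_pow_atTop (two_ne_zero)).comp
        (Filter.tendsto_abs_atBot_atTop (G := ℝ))
      exact this.congr (fun t => by simp [Function.comp, sq_abs])
    exact Filter.tendsto_neg_atTop_atBot.comp h2
  have := (Real.tendsto_exp_atBot).comp h1
  simpa using this.div_const 2

lemma gauss_int_Iic (u : ℝ) :
    ∫ t in Set.Iic u, (-t) * Real.exp (-t^2) = Real.exp (-u^2) / 2 := by
  have h := integral_Iic_of_hasDerivAt_of_tendsto'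
    (f := fun t : ℝ => Real.exp (-t^2) / 2) (f' := fun t : ℝ => (-t) * Real.exp (-t^2))
    (a := u) (m := 0)
    (fun x _ => by
      have h1 : HasDerivAt (fun t : ℝ => -t^2) (-(2*x^1*1)) x := ((hasDerivAt_id x).pow 2).neg
      have h2 := (h1.exp).div_const 2
      exact h2.congr_deriv (by ring))
    (neg_mul_gauss_integrable.integrableOn) gauss_tendsto_zero
  rw [h]; ring

lemma erf_tail {u : ℝ} (hu : u < 0) :
    (1 + erf u) * (-u) ≤ Real.exp (-u^2) / Real.sqrt π := by
  rw [erf_Iic]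
  have hπ : 0 < Real.sqrt π := Real.sqrt_pos.mpr Real.pi_pos
  have key : (-u) * (∫ t in Set.Iic u, Real.exp (-t^2)) ≤ Real.exp (-u^2) / 2 := by
    rw [← integral_const_mul, ← gauss_int_Iic u]
    refine setIntegral_mono_on (gauss_integrable.integrableOn.const_mul _)
      neg_mul_gauss_integrable.integrableOn measurableSet_Iic ?_
    intro t ht
    have h1 : -u ≤ -t := by simpa using ht
    exact mul_le_mul_of_nonneg_right h1 (Real.exp_pos _).le
  calc 2 / Real.sqrt π * (∫ t in Set.Iic u, Real.exp (-t^2)) * (-u)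
      = (2 / Real.sqrt π) * ((-u) * ∫ t in Set.Iic u, Real.exp (-t^2)) := by ring
    _ ≤ (2 / Real.sqrt π) * (Real.exp (-u^2) / 2) :=
        mul_le_mul_of_nonneg_left key (by positivity)
    _ = Real.exp (-u^2) / Real.sqrt π := by field_simp

lemma erf_hasDerivAt (x : ℝ) :
    HasDerivAt erf (2 / Real.sqrt π * Real.exp (-x^2)) x := by
  have hc : Continuous (fun t : ℝ => Real.exp (-t^2)) := by continuity
  have h := intervalIntegral.integral_hasDerivAt_right
    (hc.intervalIntegrable 0 x)
    (hc.stronglyMeasurable.stronglyMeasurableAtFilter)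
    hc.continuousAt
  exact h.const_mul (2 / Real.sqrt π)

noncomputable def F1 (P : ℝ) : ℝ → ℝ := fun B =>
  -((1 + erf (Real.sqrt (B/2) - Real.sqrt (P/2))) *
    Real.exp (-(Real.sqrt (B/2) - Real.sqrt (P/2))^2) / (2 * Real.sqrt π * Real.sqrt (2*B)))

noncomputable def F2 (P : ℝ) : ℝ → ℝ := fun B =>
  Real.exp (-(Real.sqrt (B/2) - Real.sqrt (P/2))^2) / (4*B*Real.sqrt π) *
    ((1 + erf (Real.sqrt (B/2) - Real.sqrt (P/2))) *
      ((Real.sqrt (B/2) - Real.sqrt (P/2)) + 1/Real.sqrt (2*B))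
      - Real.exp (-(Real.sqrt (B/2) - Real.sqrt (P/2))^2)/Real.sqrt π)

section
variable (P : ℝ)

lemma sqrt_half_eq {B : ℝ} : Real.sqrt (2*B) = 2 * Real.sqrt (B/2) := by
  rw [show (2:ℝ)*B = 2^2 * (B/2) by ring, Real.sqrt_mul (by positivity), Real.sqrt_sq (by norm_num)]

lemma hasDerivAt_v {B : ℝ} (hB : 0 < B) :
    HasDerivAt (fun B : ℝ => Real.sqrt (B/2) - Real.sqrt (P/2))
      ((1/2) / (2 * Real.sqrt (B/2))) B := by
  have h1 : HasDerivAt (fun B : ℝ => B/2) (1/2) B := (hasDerivAt_id B).div_const 2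
  exact (h1.sqrt (by positivity)).sub_const _

lemma hasDerivAt_g (B : ℝ) (hB : 0 < B) :
    HasDerivAt (fun B => 1 - (1/2 + 1/2 * erf (Real.sqrt (B/2) - Real.sqrt (P/2)))^2)
      (F1 P B) B := by
  have hd2 := hasDerivAt_v P hB
  have hd3 : HasDerivAt (fun B : ℝ => erf (Real.sqrt (B/2) - Real.sqrt (P/2)))
      (2 / Real.sqrt π * Real.exp (-(Real.sqrt (B/2) - Real.sqrt (P/2))^2) *
        ((1/2) / (2 * Real.sqrt (B/2)))) B :=
    (erf_hasDerivAt _).comp B hd2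
  have hh : HasDerivAt (fun B : ℝ => 1/2 + 1/2 * erf (Real.sqrt (B/2) - Real.sqrt (P/2)))
      (1/2 * (2 / Real.sqrt π * Real.exp (-(Real.sqrt (B/2) - Real.sqrt (P/2))^2) *
        ((1/2) / (2 * Real.sqrt (B/2))))) B :=
    (hd3.const_mul (1/2)).const_add (1/2)
  have hg := (hh.pow 2).const_sub 1
  refine hg.congr_deriv (Eq.symm ?_)
  have hs : Real.sqrt (2*B) = 2 * Real.sqrt (B/2) := sqrt_half_eq
  have hπ : 0 < Real.sqrt π := Real.sqrt_pos.mpr Real.pi_pos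
  have hB2 : 0 < Real.sqrt (B/2) := Real.sqrt_pos.mpr (by positivity)
  rw [F1, hs]
  generalize Real.exp (-(Real.sqrt (B/2) - Real.sqrt (P/2))^2) = E
  generalize erf (Real.sqrt (B/2) - Real.sqrt (P/2)) = w
  generalize hx : Real.sqrt (B/2) = x at hB2
  field_simp
  ring

lemma hasDerivAt_F1 (B : ℝ) (hB : 0 < B) :
    HasDerivAt (F1 P) (F2 P B) B := by
  have hπ : 0 < Real.sqrt π := Real.sqrt_pos.mpr Real.pi_pos
  have hB2 : 0 < Real.sqrt (B/2) := Real.sqrt_pos.mpr (by positivity)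
  have hs2B : 0 < Real.sqrt (2*B) := Real.sqrt_pos.mpr (by positivity)
  have hd2 := hasDerivAt_v P hB
  have dW : HasDerivAt (fun B : ℝ => 1 + erf (Real.sqrt (B/2) - Real.sqrt (P/2)))
      (2 / Real.sqrt π * Real.exp (-(Real.sqrt (B/2) - Real.sqrt (P/2))^2) *
        ((1/2) / (2 * Real.sqrt (B/2)))) B :=
    ((erf_hasDerivAt _).comp B hd2).const_add 1
  have dE : HasDerivAt (fun B : ℝ => Real.exp (-(Real.sqrt (B/2) - Real.sqrt (P/2))^2))
      (Real.exp (-(Real.sqrt (B/2) - Real.sqrt (P/2))^2) *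
        (-(2 * (Real.sqrt (B/2) - Real.sqrt (P/2))^1 * ((1/2) / (2 * Real.sqrt (B/2)))))) B :=
    ((hd2.pow 2).neg).exp
  have ds : HasDerivAt (fun B : ℝ => Real.sqrt (2*B)) ((2*1) / (2 * Real.sqrt (2*B))) B := by
    have h1 : HasDerivAt (fun B : ℝ => 2*B) (2*1) B := (hasDerivAt_id B).const_mul 2
    exact h1.sqrt (by positivity)
  have dden : HasDerivAt (fun B : ℝ => 2 * Real.sqrt π * Real.sqrt (2*B))
      (2 * Real.sqrt π * ((2*1) / (2 * Real.sqrt (2*B)))) B := ds.const_mul _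
  have hne : 2 * Real.sqrt π * Real.sqrt (2*B) ≠ 0 := by positivity
  have total := ((dW.mul dE).div dden hne).neg
  have hF1 : F1 P = fun B => -((1 + erf (Real.sqrt (B/2) - Real.sqrt (P/2))) *
      Real.exp (-(Real.sqrt (B/2) - Real.sqrt (P/2))^2) / (2 * Real.sqrt π * Real.sqrt (2*B))) := rfl
  rw [hF1]
  refine total.congr_deriv (Eq.symm ?_)
  simp only [Pi.mul_apply]
  rw [F2]
  have hs : Real.sqrt (2*B) = 2 * Real.sqrt (B/2) := sqrt_half_eq
  rw [hs]
  generalize Real.exp (-(Real.sqrt (B/2) - Real.sqrt (P/2))^2) = E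
  generalize erf (Real.sqrt (B/2) - Real.sqrt (P/2)) = w
  generalize Real.sqrt (P/2) = y
  have hBx : B = 2 * Real.sqrt (B/2)^2 := by
    rw [Real.sq_sqrt (by positivity : (0:ℝ) ≤ B/2)]; ring
  generalize hx : Real.sqrt (B/2) = x at hBx hB2
  rw [hBx]
  field_simp
  ring

end

theorem stmt_17 (P : ℝ) (hP : 2 < P)
    (g₂ : ℝ → ℝ)
    (hg₂ : ∀ B, g₂ B = 1 - (1/2 + (1/2) * erf (Real.sqrt (B/2) - Real.sqrt (P/2)))^2)
    (ζ₁ ζ₂ : ℝ)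
    (hζ₁ : ζ₁ = ((Real.sqrt P - Real.sqrt (P - 2)) / 2)^2)
    (hζ₂ : ζ₂ = ((Real.sqrt P + Real.sqrt (P - 2)) / 2)^2) :
    ConcaveOn ℝ (Set.Icc ζ₁ ζ₂) g₂ := by
  have hg₂' : g₂ = fun B => 1 - (1/2 + 1/2 * erf (Real.sqrt (B/2) - Real.sqrt (P/2)))^2 :=
    funext hg₂
  rw [hg₂']
  have hP0 : (0:ℝ) < P := by linarith
  have h2 : Real.sqrt P ^ 2 = P := Real.sq_sqrt hP0.le
  have h3 : Real.sqrt (P-2) ^ 2 = P - 2 := Real.sq_sqrt (by linarith)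
  have hlt : Real.sqrt (P-2) < Real.sqrt P := Real.sqrt_lt_sqrt (by linarith) (by linarith)
  have hnn : 0 ≤ Real.sqrt (P-2) := Real.sqrt_nonneg _
  have hζ₁pos : 0 < ζ₁ := by
    rw [hζ₁]
    exact pow_pos (by linarith) 2
  have hsum : ζ₁ + ζ₂ = P - 1 := by rw [hζ₁, hζ₂]; linear_combination h2/2 + h3/2
  have hprod : ζ₁ * ζ₂ = 1/4 := by
    rw [hζ₁, hζ₂]
    linear_combination ((Real.sqrt P^2 - Real.sqrt (P-2)^2 + 2)/16) * h2
      - ((Real.sqrt P^2 - Real.sqrt (P-2)^2 + 2)/16) * h3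
  refine concaveOn_of_hasDerivWithinAt2_nonpos (convex_Icc _ _)
    (f' := F1 P) (f'' := F2 P) ?_ ?_ ?_ ?_
  · intro B hB
    exact ((hasDerivAt_g P B (hζ₁pos.trans_le hB.1)).continuousAt).continuousWithinAt
  · rw [interior_Icc]
    intro x hx
    exact (hasDerivAt_g P x (hζ₁pos.trans hx.1)).hasDerivWithinAt
  · rw [interior_Icc]
    intro x hx
    exact (hasDerivAt_F1 P x (hζ₁pos.trans hx.1)).hasDerivWithinAt
  · rw [interior_Icc]
    intro x hx
    have hx0 : 0 < x := hζ₁pos.trans hx.1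
    rw [F2]
    obtain ⟨v, hv⟩ : ∃ v, Real.sqrt (x/2) - Real.sqrt (P/2) = v := ⟨_, rfl⟩
    rw [hv]
    have hπ : 0 < Real.sqrt π := Real.sqrt_pos.mpr Real.pi_pos
    have hW : 0 ≤ 1 + erf v := one_add_erf_nonneg v
    have hEπ : 0 < Real.exp (-v^2) / Real.sqrt π := by positivity
    have hbr : (1 + erf v) * (v + 1/Real.sqrt (2*x)) - Real.exp (-v^2)/Real.sqrt π ≤ 0 := by
      by_cases hc : v + 1/Real.sqrt (2*x) ≤ 0
      · have := mul_nonpos_of_nonneg_of_nonpos hW hc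
        linarith
      · push_neg at hc
        have hq : 4*x^2 - 4*(P-1)*x + 1 ≤ 0 := by
          have expand : (x - ζ₁) * (ζ₂ - x) = (P-1)*x - x^2 - 1/4 := by
            linear_combination x*hsum - hprod
          have h5 : (0:ℝ) ≤ (P-1)*x - x^2 - 1/4 := by
            rw [← expand]
            exact mul_nonneg (by linarith [hx.1]) (by linarith [hx.2])
          linarith
        have hs2 : Real.sqrt (2*x) ^ 2 = 2*x := Real.sq_sqrt (by positivity)
        have hr2 : Real.sqrt (2*P) ^ 2 = 2*P := Real.sq_sqrt (by positivity)
        have hs0 : 0 < Real.sqrt (2*x) := Real.sqrt_pos.mpr (by positivity)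
        have hr0 : 0 < Real.sqrt (2*P) := Real.sqrt_pos.mpr (by positivity)
        have h6 : (Real.sqrt (2*x)^2 + 1)^2 ≤ (Real.sqrt (2*P) * Real.sqrt (2*x))^2 := by
          rw [mul_pow, hs2, hr2]; nlinarith [hq]
        have h8 : Real.sqrt (2*x)^2 + 1 ≤ Real.sqrt (2*P) * Real.sqrt (2*x) :=
          (abs_le_of_sq_le_sq' h6 (by positivity)).2
        have hkey : Real.sqrt (2*x) + 1/Real.sqrt (2*x) ≤ Real.sqrt (2*P) := by
          rw [show Real.sqrt (2*x) + 1/Real.sqrt (2*x)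
              = (Real.sqrt (2*x)^2 + 1)/Real.sqrt (2*x) by field_simp,
            div_le_iff₀ hs0]
          linarith
        have hvB : Real.sqrt (x/2) = Real.sqrt (2*x) / 2 := by
          rw [sqrt_half_eq]; ring
        have hvP : Real.sqrt (P/2) = Real.sqrt (2*P) / 2 := by
          rw [sqrt_half_eq]; ring
        have hle : v + 1/Real.sqrt (2*x) ≤ -v := by
          rw [← hv, hvB, hvP]; linarith
        have hv0 : v < 0 := by linarith
        have ht := erf_tail hv0
        have hmul := mul_le_mul_of_nonneg_left hle hW
        linarith
    have hpos : 0 ≤ Real.exp (-v^2) / (4*x*Real.sqrt π) := by positivity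
    exact mul_nonpos_of_nonneg_of_nonpos hpos hbr
end
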